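/- In the errorless relay AoI model with piecewise formula: for the greedy policy (round-robin sampling with S = U), for all t ≥ 1, Σ_{k=1}^K g_k(t) = tK − Σ_{τ=1}^{t−1} min{τS, K} and Σ_{k=1}^K h_k(t) = tK − Σ_{τ=1}^{t−1} min{(τ−1)U, K}. -/

import Mathlib

open Finset

lemma greedy_count {n s : ℕ} {α : Type*} [LinearOrder α] (A : Finset (Fin n))
    (hA : A.card = s) (f : Fin n → α) (hgr : ∀ k ∈ A, ∀ j ∉ A, f j ≤ f k) (a : α) :
    (A.filter (fun k => a ≤ f k)).card
      = min (Finset.univ.filter (fun k => a ≤ f k)).card s := by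
  set B := Finset.univ.filter (fun k => a ≤ f k) with hB
  have hfil : A.filter (fun k => a ≤ f k) = B ∩ A := by
    ext x; simp [hB, and_comm]
  rcases le_or_gt B.card s with hc | hc
  · have hBA : B ⊆ A := by
      intro j hj
      by_contra hjA
      have hja : a ≤ f j := by simpa [hB] using hj
      have hAB : A ⊆ B := by
        intro k hk
        simp only [hB, Finset.mem_filter, Finset.mem_univ, true_and]
        exact le_trans hja (hgr k hk j hjA)
      have hins : insert j A ⊆ B := Finset.insert_subset hj hAB
      have := Finset.card_le_card hins
      rw [Finset.card_insert_of_notMem hjA, hA] at this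
      omega
    rw [hfil, Finset.inter_eq_left.mpr hBA]
    omega
  · have hAB : A ⊆ B := by
      intro k hk
      by_contra hkB
      have h1 : B ∩ A ⊆ A.erase k := by
        intro x hx
        rw [Finset.mem_erase]
        refine ⟨?_, Finset.mem_of_mem_inter_right hx⟩
        rintro rfl
        exact hkB (Finset.mem_of_mem_inter_left hx)
      have h2 : (B ∩ A).card ≤ s - 1 := by
        have := Finset.card_le_card h1
        rwa [Finset.card_erase_of_mem hk, hA] at this
      have h3 : (B \ A).card + (B ∩ A).card = B.card :=
        Finset.card_sdiff_add_card_inter B A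
      have h4 : 0 < (B \ A).card := by omega
      obtain ⟨j, hj⟩ := Finset.card_pos.mp h4
      rw [Finset.mem_sdiff] at hj
      have hfj : a ≤ f j := by simpa [hB] using hj.1
      have hak : a ≤ f k := le_trans hfj (hgr k hk j hj.2)
      exact hkB (by simp only [hB, Finset.mem_filter, Finset.mem_univ, true_and]; exact hak)
    rw [hfil, Finset.inter_eq_right.mpr hAB, hA]
    omega

lemma sum_eq_card {n : ℕ} (A : Finset (Fin n)) (f : Fin n → ℕ) (T : ℕ)
    (hf : ∀ k ∈ A, f k ≤ T) :
    ∑ k ∈ A, f k = ∑ a ∈ Finset.Icc 1 T, (A.filter (fun k => a ≤ f k)).card := by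
  simp_rw [Finset.card_filter]
  rw [Finset.sum_comm]
  refine Finset.sum_congr rfl fun k hk => ?_
  rw [← Finset.card_filter]
  have : (Finset.Icc 1 T).filter (fun a => a ≤ f k) = Finset.Icc 1 (f k) := by
    ext a
    simp only [Finset.mem_filter, Finset.mem_Icc]
    have := hf k hk
    omega
  rw [this, Nat.card_Icc]
  omega

lemma tele (s K : ℕ) : ∀ t, ∑ a ∈ Finset.Icc 1 t, min (K - (a-1)*s) s = K - (K - t*s) := by
  intro t
  induction t with
  | zero => simp
  | succ t ih =>
    rw [Finset.sum_Icc_succ_top (by omega), ih]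
    have h1 : (t+1)*s = t*s + s := by ring
    have h2 : (t+1-1)*s = t*s := by simp
    rw [h1, h2]
    set x := t*s
    omega

lemma shiftsum (s K : ℕ) : ∀ t, ∑ τ ∈ Finset.Icc 1 (t+1), min ((τ-1)*s) K
    = ∑ τ ∈ Finset.Icc 1 t, min (τ*s) K := by
  intro t
  induction t with
  | zero => simp
  | succ t ih =>
    rw [Finset.sum_Icc_succ_top (show 1 ≤ t+1+1 by omega), ih,
      Finset.sum_Icc_succ_top (show 1 ≤ t+1 by omega)]
    simp

theorem stmt14 (K s : ℕ) (hs : 1 ≤ s) (hsK : s < K)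
    (S U : ℕ → Finset (Fin K)) (g h : ℕ → Fin K → ℕ)
    (hg1 : ∀ k, g 1 k = 1) (hh1 : ∀ k, h 1 k = 1)
    (hgS : ∀ t, 1 ≤ t → ∀ k ∈ S t, g (t + 1) k = 1)
    (hgN : ∀ t, 1 ≤ t → ∀ k ∉ S t, g (t + 1) k = g t k + 1)
    (hhU : ∀ t, 1 ≤ t → ∀ k ∈ U t, h (t + 1) k = g t k + 1)
    (hhN : ∀ t, 1 ≤ t → ∀ k ∉ U t, h (t + 1) k = h t k + 1)
    (hSgreedy : ∀ t, 1 ≤ t → (S t).card = s ∧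
      ∀ k ∈ S t, ∀ j ∉ S t, g t j ≤ g t k)
    (hUgreedy : ∀ t, 1 ≤ t → (U t).card = s ∧
      ∀ k ∈ U t, ∀ j ∉ U t, (h t j : ℤ) - g t j ≤ (h t k : ℤ) - g t k) :
    ∀ t, 1 ≤ t →
      ((∑ k : Fin K, (g t k : ℤ)) =
        (t : ℤ) * K - ∑ τ ∈ Finset.Icc 1 (t - 1), ((min (τ * s) K : ℕ) : ℤ)) ∧
      ((∑ k : Fin K, (h t k : ℤ)) =
        (t : ℤ) * K - ∑ τ ∈ Finset.Icc 1 (t - 1), ((min ((τ - 1) * s) K : ℕ) : ℤ)) := by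
  have key : ∀ t, 1 ≤ t →
      (∀ k, 1 ≤ g t k) ∧ (∀ k, g t k ≤ t) ∧ (∀ k, g t k ≤ h t k) ∧ (∀ k, h t k ≤ t) ∧
      (∀ a, 1 ≤ a → a ≤ t →
        (Finset.univ.filter (fun k => a ≤ g t k)).card = K - (a-1)*s) ∧
      ((Finset.univ.filter (fun k => g t k < h t k)).card ≤ s) ∧
      ((∑ k : Fin K, (g t k : ℤ)) =
        (t : ℤ) * K - ∑ τ ∈ Finset.Icc 1 (t - 1), ((min (τ * s) K : ℕ) : ℤ)) ∧
      ((∑ k : Fin K, (h t k : ℤ)) =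
        (t : ℤ) * K - ∑ τ ∈ Finset.Icc 1 (t - 1), ((min ((τ - 1) * s) K : ℕ) : ℤ)) := by
    intro t ht
    induction t, ht using Nat.le_induction with
    | base =>
      refine ⟨fun k => by rw [hg1], fun k => by rw [hg1], fun k => by rw [hg1, hh1],
        fun k => by rw [hh1], ?_, ?_, ?_, ?_⟩
      · intro a ha1 ha2
        have : a = 1 := by omega
        subst this
        simp [hg1]
      · simp [hg1, hh1]
      · simp [hg1]
      · simp [hh1]
    | succ t ht ih =>
      obtain ⟨I1, I2, I3, I4, I5, I6, I7, I8⟩ := ih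
      obtain ⟨hScard, hSg⟩ := hSgreedy t ht
      obtain ⟨hUcard, hUg⟩ := hUgreedy t ht
      -- all positive-gap sensors are in U t
      have posU : (Finset.univ.filter (fun k => g t k < h t k)) ⊆ U t := by
        intro j hj
        by_contra hjU
        have hjpos : g t j < h t j := (Finset.mem_filter.mp hj).2
        have hU_pos : ∀ k ∈ U t, g t k < h t k := by
          intro k hk
          have h1 := hUg k hk j hjU
          have h2 : (0:ℤ) < (h t j : ℤ) - g t j := by
            have : (g t j : ℤ) < h t j := by exact_mod_cast hjpos
            linarith
          have h3 : (g t k : ℤ) < h t k := by linarith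
          exact_mod_cast h3
        have hins : insert j (U t) ⊆ Finset.univ.filter (fun k => g t k < h t k) :=
          Finset.insert_subset hj
            (fun k hk => Finset.mem_filter.mpr ⟨Finset.mem_univ _, hU_pos k hk⟩)
        have := Finset.card_le_card hins
        rw [Finset.card_insert_of_notMem hjU, hUcard] at this
        omega
      -- sum of gaps over U equals total sum of gaps
      have hsumU : ∑ k ∈ U t, ((h t k : ℤ) - g t k) = ∑ k : Fin K, ((h t k : ℤ) - g t k) := by
        have hzero : ∀ k, ¬ (g t k < h t k) → ((h t k : ℤ) - g t k) = 0 := by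
          intro k hk
          have := I3 k
          have : g t k = h t k := by omega
          rw [this]; ring
        have e1 : ∑ k ∈ Finset.univ.filter (fun k => g t k < h t k), ((h t k : ℤ) - g t k)
            = ∑ k ∈ U t, ((h t k : ℤ) - g t k) :=
          Finset.sum_subset posU (fun k _ hk => hzero k (by
            intro hc; exact hk (Finset.mem_filter.mpr ⟨Finset.mem_univ _, hc⟩)))
        have e2 : ∑ k ∈ Finset.univ.filter (fun k => g t k < h t k), ((h t k : ℤ) - g t k)
            = ∑ k : Fin K, ((h t k : ℤ) - g t k) :=
          Finset.sum_subset (Finset.subset_univ _) (fun k _ hk => hzero k (by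
            intro hc; exact hk (Finset.mem_filter.mpr ⟨Finset.mem_univ _, hc⟩)))
        rw [← e1, e2]
      -- sum of h at t+1
      have hsumH : ∑ k : Fin K, (h (t+1) k : ℤ) = K + ∑ k : Fin K, (g t k : ℤ) := by
        have e1 : ∑ k ∈ Finset.univ \ U t, (h (t+1) k : ℤ) + ∑ k ∈ U t, (h (t+1) k : ℤ)
            = ∑ k : Fin K, (h (t+1) k : ℤ) := Finset.sum_sdiff (Finset.subset_univ _)
        have e2 : ∑ k ∈ Finset.univ \ U t, (h (t+1) k : ℤ)
            = ∑ k ∈ Finset.univ \ U t, ((h t k : ℤ) + 1) :=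
          Finset.sum_congr rfl fun k hk => by
            rw [hhN t ht k (Finset.mem_sdiff.mp hk).2]; push_cast; ring
        have e3 : ∑ k ∈ U t, (h (t+1) k : ℤ) = ∑ k ∈ U t, ((g t k : ℤ) + 1) :=
          Finset.sum_congr rfl fun k hk => by
            rw [hhU t ht k hk]; push_cast; ring
        have e4 : ∑ k ∈ U t, ((g t k : ℤ) + 1)
            = ∑ k ∈ U t, ((h t k : ℤ) + 1) - ∑ k ∈ U t, ((h t k : ℤ) - g t k) := by
          rw [← Finset.sum_sub_distrib]
          exact Finset.sum_congr rfl fun k _ => by ring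
        have e5 : ∑ k ∈ Finset.univ \ U t, ((h t k : ℤ) + 1) + ∑ k ∈ U t, ((h t k : ℤ) + 1)
            = ∑ k : Fin K, ((h t k : ℤ) + 1) := Finset.sum_sdiff (Finset.subset_univ _)
        have e6 : ∑ k : Fin K, ((h t k : ℤ) + 1) = (∑ k : Fin K, (h t k : ℤ)) + K := by
          rw [Finset.sum_add_distrib]; simp [Finset.card_univ]
        have e7 : ∑ k : Fin K, ((h t k : ℤ) - g t k)
            = (∑ k : Fin K, (h t k : ℤ)) - ∑ k : Fin K, (g t k : ℤ) :=
          Finset.sum_sub_distrib _ _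
        rw [← e1, e2, e3, e4, hsumU, e7]
        linarith [e5, e6]
      -- sum over S of g t equals min(ts, K)
      have hSsum : ∑ k ∈ S t, g t k = min (t*s) K := by
        rw [sum_eq_card (S t) (g t) t (fun k _ => I2 k)]
        have hcong : ∀ a ∈ Finset.Icc 1 t,
            ((S t).filter (fun k => a ≤ g t k)).card = min (K - (a-1)*s) s := by
          intro a ha
          rw [Finset.mem_Icc] at ha
          rw [greedy_count (S t) hScard (g t) hSg a, I5 a ha.1 ha.2]
        rw [Finset.sum_congr rfl hcong, tele s K t]
        omega
      -- sum of g at t+1 (ℕ version)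
      have egs : (∑ k : Fin K, g (t+1) k) + ∑ k ∈ S t, g t k
          = (∑ k : Fin K, g t k) + K := by
        have e1 : ∑ k ∈ Finset.univ \ S t, g (t+1) k + ∑ k ∈ S t, g (t+1) k
            = ∑ k : Fin K, g (t+1) k := Finset.sum_sdiff (Finset.subset_univ _)
        have e2 : ∑ k ∈ Finset.univ \ S t, g (t+1) k
            = ∑ k ∈ Finset.univ \ S t, (g t k + 1) :=
          Finset.sum_congr rfl fun k hk => hgN t ht k (Finset.mem_sdiff.mp hk).2
        have e3 : ∑ k ∈ S t, g (t+1) k = ∑ k ∈ S t, 1 :=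
          Finset.sum_congr rfl fun k hk => hgS t ht k hk
        have e4 : ∑ k ∈ S t, (1:ℕ) + ∑ k ∈ S t, g t k = ∑ k ∈ S t, (g t k + 1) := by
          rw [Finset.sum_add_distrib]; omega
        have e5 : ∑ k ∈ Finset.univ \ S t, (g t k + 1) + ∑ k ∈ S t, (g t k + 1)
            = ∑ k : Fin K, (g t k + 1) := Finset.sum_sdiff (Finset.subset_univ _)
        have e6 : ∑ k : Fin K, (g t k + 1) = (∑ k : Fin K, g t k) + K := by
          rw [Finset.sum_add_distrib]; simp [Finset.card_univ]
        calc (∑ k : Fin K, g (t+1) k) + ∑ k ∈ S t, g t k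
            = (∑ k ∈ Finset.univ \ S t, g (t+1) k + ∑ k ∈ S t, g (t+1) k)
              + ∑ k ∈ S t, g t k := by rw [e1]
          _ = ∑ k ∈ Finset.univ \ S t, (g t k + 1)
              + (∑ k ∈ S t, (1:ℕ) + ∑ k ∈ S t, g t k) := by rw [e2, e3]; ring
          _ = ∑ k ∈ Finset.univ \ S t, (g t k + 1) + ∑ k ∈ S t, (g t k + 1) := by rw [e4]
          _ = (∑ k : Fin K, g t k) + K := by rw [e5, e6]
      -- new g bounds
      have nI1 : ∀ k, 1 ≤ g (t+1) k := by
        intro k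
        by_cases hk : k ∈ S t
        · rw [hgS t ht k hk]
        · rw [hgN t ht k hk]; omega
      have nI2 : ∀ k, g (t+1) k ≤ t+1 := by
        intro k
        by_cases hk : k ∈ S t
        · rw [hgS t ht k hk]; omega
        · rw [hgN t ht k hk]; have := I2 k; omega
      have nI3 : ∀ k, g (t+1) k ≤ h (t+1) k := by
        intro k
        by_cases hk : k ∈ U t
        · rw [hhU t ht k hk]
          by_cases hk' : k ∈ S t
          · rw [hgS t ht k hk']; omega
          · rw [hgN t ht k hk']
        · rw [hhN t ht k hk]
          by_cases hk' : k ∈ S t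
          · rw [hgS t ht k hk']; have := I3 k; omega
          · rw [hgN t ht k hk']; have := I3 k; omega
      have nI4 : ∀ k, h (t+1) k ≤ t+1 := by
        intro k
        by_cases hk : k ∈ U t
        · rw [hhU t ht k hk]; have := I2 k; omega
        · rw [hhN t ht k hk]; have := I4 k; omega
      -- new distribution
      have nI5 : ∀ a, 1 ≤ a → a ≤ t+1 →
          (Finset.univ.filter (fun k => a ≤ g (t+1) k)).card = K - (a-1)*s := by
        intro a ha1 ha2
        rcases Nat.lt_or_ge a 2 with ha | ha
        · have : a = 1 := by omega
          subst this
          have : Finset.univ.filter (fun k => 1 ≤ g (t+1) k) = (Finset.univ : Finset (Fin K)) := by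
            ext k; simp [nI1 k]
          rw [this]; simp [Finset.card_univ]
        · have hBeq : Finset.univ.filter (fun k => a ≤ g (t+1) k)
              = (Finset.univ.filter (fun k => a - 1 ≤ g t k)) \ S t := by
            ext k
            simp only [Finset.mem_filter, Finset.mem_univ, true_and, Finset.mem_sdiff]
            constructor
            · intro hk
              by_cases hkS : k ∈ S t
              · rw [hgS t ht k hkS] at hk; omega
              · rw [hgN t ht k hkS] at hk
                exact ⟨by omega, hkS⟩
            · rintro ⟨hk, hkS⟩
              rw [hgN t ht k hkS]
              omega
          set B := Finset.univ.filter (fun k => a - 1 ≤ g t k) with hB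
          have hBcard : B.card = K - (a-2)*s := by
            have := I5 (a-1) (by omega) (by omega)
            have ha' : a - 1 - 1 = a - 2 := by omega
            rw [ha'] at this
            exact this
          have hBS : B \ S t = B \ (B ∩ S t) := by
            ext x; simp only [Finset.mem_sdiff, Finset.mem_inter]; tauto
          have hBint : (B ∩ S t).card = min B.card s := by
            have := greedy_count (S t) hScard (g t) hSg (a-1)
            have hint : B ∩ S t = (S t).filter (fun k => a - 1 ≤ g t k) := by
              ext x; simp [hB, and_comm]
            rw [hint, this]
          rw [hBeq, hBS, Finset.card_sdiff_of_subset Finset.inter_subset_left, hBint, hBcard]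
          obtain ⟨b, rfl⟩ : ∃ b, a = b + 2 := ⟨a - 2, by omega⟩
          have e1 : b + 2 - 1 = b + 1 := by omega
          have e2 : b + 2 - 2 = b := by omega
          rw [e1, e2, Nat.succ_mul]
          set m := b * s
          omega
      -- new gap bound
      have nI6 : (Finset.univ.filter (fun k => g (t+1) k < h (t+1) k)).card ≤ s := by
        have hsub : Finset.univ.filter (fun k => g (t+1) k < h (t+1) k) ⊆ S t := by
          intro k hk
          have hkpos : g (t+1) k < h (t+1) k := (Finset.mem_filter.mp hk).2
          by_contra hkS
          rw [hgN t ht k hkS] at hkpos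
          by_cases hkU : k ∈ U t
          · rw [hhU t ht k hkU] at hkpos; omega
          · rw [hhN t ht k hkU] at hkpos
            have : k ∈ Finset.univ.filter (fun k => g t k < h t k) :=
              Finset.mem_filter.mpr ⟨Finset.mem_univ _, by omega⟩
            exact hkU (posU this)
        have := Finset.card_le_card hsub
        omega
      -- new sums
      obtain ⟨m, rfl⟩ : ∃ m, t = m + 1 := ⟨t - 1, by omega⟩
      have hIcc : ∑ τ ∈ Finset.Icc 1 (m+1), ((min (τ * s) K : ℕ) : ℤ)
          = ∑ τ ∈ Finset.Icc 1 m, ((min (τ * s) K : ℕ) : ℤ)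
            + ((min ((m+1) * s) K : ℕ) : ℤ) := by
        rw [Finset.sum_Icc_succ_top (by omega)]
      have egsZ : (∑ k : Fin K, (g (m+1+1) k : ℤ)) + ∑ k ∈ S (m+1), (g (m+1) k : ℤ)
          = (∑ k : Fin K, (g (m+1) k : ℤ)) + K := by exact_mod_cast egs
      have hSsumZ : ∑ k ∈ S (m+1), (g (m+1) k : ℤ) = ((min ((m+1)*s) K : ℕ) : ℤ) := by
        exact_mod_cast hSsum
      have nI7 : (∑ k : Fin K, (g (m+1+1) k : ℤ)) =
          ((m+1+1 : ℕ) : ℤ) * K - ∑ τ ∈ Finset.Icc 1 (m+1+1-1), ((min (τ * s) K : ℕ) : ℤ) := by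
        have ht1 : (m+1+1-1 : ℕ) = m + 1 := by omega
        have ht2 : (m+1-1 : ℕ) = m := by omega
        rw [ht1, hIcc]
        rw [ht2] at I7
        push_cast at I7 ⊢
        linarith [egsZ, hSsumZ, I7]
      have nI8 : (∑ k : Fin K, (h (m+1+1) k : ℤ)) =
          ((m+1+1 : ℕ) : ℤ) * K
            - ∑ τ ∈ Finset.Icc 1 (m+1+1-1), ((min ((τ-1) * s) K : ℕ) : ℤ) := by
        have ht1 : (m+1+1-1 : ℕ) = m + 1 := by omega
        have ht2 : (m+1-1 : ℕ) = m := by omega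
        have hshift : ∑ τ ∈ Finset.Icc 1 (m+1), ((min ((τ-1) * s) K : ℕ) : ℤ)
            = ∑ τ ∈ Finset.Icc 1 m, ((min (τ * s) K : ℕ) : ℤ) := by
          exact_mod_cast congrArg (Nat.cast : ℕ → ℤ) (shiftsum s K m)
        rw [ht1, hshift]
        rw [ht2] at I7
        push_cast at I7 ⊢
        linarith [hsumH, I7]
      exact ⟨nI1, nI2, nI3, nI4, nI5, nI6, nI7, nI8⟩
  intro t ht
  obtain ⟨_, _, _, _, _, _, I7, I8⟩ := key t ht
  exact ⟨I7, I8⟩
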